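/- For the ATRS R = {f → s, f ∘ (s ∘ x) → s ∘ (s ∘ (f ∘ x))}, the uncurried system U↓(R) = {f → s, f_1(x) → s_1(x), f_1(s_1(x)) → s_1(s_1(f_1(x))), f ∘ x → f_1(x), s ∘ x → s_1(x)} satisfies dh(innermost →_{U↓(R)}, f_1^n(s_1(x))) ≥ 2^n for all n ≥ 1; hence the innermost derivational complexity of U↓(R) is at least exponential, while idc_R(n) ∈ O(n). -/

import Mathlib

/-- First-order terms over a signature `F` with arity function `ar` and variables `V`. -/
inductive Term (F : Type) (ar : F → ℕ) (V : Type) : Type where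
  | var : V → Term F ar V
  | app : (f : F) → (Fin (ar f) → Term F ar V) → Term F ar V

namespace Term

variable {F V : Type} {ar : F → ℕ}

/-- Application of a substitution. -/
def subst (σ : V → Term F ar V) : Term F ar V → Term F ar V
  | .var x => σ x
  | .app f ts => .app f (fun i => (ts i).subst σ)

/-- Size of a term. -/
def size : Term F ar V → ℕ
  | .var _ => 1
  | .app _ ts => 1 + ∑ i, (ts i).size

end Term

section Rewriting

variable {F V : Type} {ar : F → ℕ}

/-- The (reflexive) subterm relation: `Subterm u t` means `u` occurs in `t`. -/
inductive Subterm : Term F ar V → Term F ar V → Prop where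
  | refl (t) : Subterm t t
  | app (f) (ts : Fin (ar f) → Term F ar V) (i) (u) :
      Subterm u (ts i) → Subterm u (.app f ts)

/-- Proper subterm: `PSub u t` means `u` is a proper subterm of `t`. -/
def PSub (u t : Term F ar V) : Prop :=
  ∃ (f : F) (ts : Fin (ar f) → Term F ar V) (i : Fin (ar f)),
    t = Term.app f ts ∧ Subterm u (ts i)

/-- One-step rewrite relation of a TRS `R`: closure of the rules under
contexts and substitutions. -/
inductive Rew (R : Set (Term F ar V × Term F ar V)) : Term F ar V → Term F ar V → Prop where
  | rule (l r : Term F ar V) (σ : V → Term F ar V) :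
      (l, r) ∈ R → Rew R (l.subst σ) (r.subst σ)
  | congr (f : F) (ts : Fin (ar f) → Term F ar V) (i : Fin (ar f)) (u : Term F ar V) :
      Rew R (ts i) u → Rew R (.app f ts) (.app f (Function.update ts i u))

/-- Many-step rewriting. -/
def RStar (R : Set (Term F ar V × Term F ar V)) : Term F ar V → Term F ar V → Prop :=
  Relation.ReflTransGen (Rew R)

/-- Normal forms. -/
def NF (R : Set (Term F ar V × Term F ar V)) (t : Term F ar V) : Prop := ∀ u, ¬ Rew R t u

/-- `t` rewrites to the normal form `u` (w.r.t. `R`). -/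
def NormTo (R : Set (Term F ar V × Term F ar V)) (t u : Term F ar V) : Prop :=
  RStar R t u ∧ NF R u

/-- Termination: the rewrite relation is well-founded. -/
def Terminating (R : Set (Term F ar V × Term F ar V)) : Prop :=
  WellFounded (fun t s => Rew R s t)

/-- Confluence. -/
def Confluent (R : Set (Term F ar V × Term F ar V)) : Prop :=
  ∀ s t u, RStar R s t → RStar R s u → ∃ v, RStar R t v ∧ RStar R u v

/-- Innermost one-step rewriting: the contracted redex has only normal
proper subterms. -/
inductive IRew (R : Set (Term F ar V × Term F ar V)) : Term F ar V → Term F ar V → Prop where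
  | rule (l r : Term F ar V) (σ : V → Term F ar V) :
      (l, r) ∈ R → (∀ u, PSub u (l.subst σ) → NF R u) →
      IRew R (l.subst σ) (r.subst σ)
  | congr (f : F) (ts : Fin (ar f) → Term F ar V) (i : Fin (ar f)) (u : Term F ar V) :
      IRew R (ts i) u → IRew R (.app f ts) (.app f (Function.update ts i u))

/-- Innermost termination. -/
def ITerminating (R : Set (Term F ar V × Term F ar V)) : Prop :=
  WellFounded (fun t s => IRew R s t)

/-- `m`-fold composition of a relation. -/
def RelPow (r : α → α → Prop) : ℕ → α → α → Prop
  | 0 => Eq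
  | n + 1 => fun a c => ∃ b, r a b ∧ RelPow r n b c

/-- Derivation height of `t` w.r.t. a relation. -/
noncomputable def dh (r : α → α → Prop) (t : α) : ℕ :=
  sSup { m | ∃ u, RelPow r m t u }

/-- Derivational complexity w.r.t. a relation, restricted to starting terms
satisfying `P`. -/
noncomputable def dcOn {F V : Type} {ar : F → ℕ}
    (r : Term F ar V → Term F ar V → Prop) (P : Term F ar V → Prop) (n : ℕ) : ℕ :=
  sSup { m | ∃ t, P t ∧ t.size ≤ n ∧ m = dh r t }

/-- `f ∈ O(g)`. -/
def BigO (f g : ℕ → ℕ) : Prop := ∃ M N : ℕ, ∀ n, f n ≤ M * g n + N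

end Rewriting
section ATRS

/-- Signature for (un)curried applicative systems: `none` is the binary
application symbol `∘`, and `some (c, i)` is the symbol `c_i` of arity `i`
(with `c_0 = c` an applicative constant). -/
abbrev USig (C : Type) := Option (C × ℕ)

/-- Arity function for `USig`. -/
def uar {C : Type} : USig C → ℕ
  | none => 2
  | some (_, i) => i

/-- Terms over the signature `USig C` (variables are natural numbers). -/
abbrev ATerm (C : Type) := Term (USig C) uar ℕ

variable {C : Type}

/-- Binary application `s ∘ t`. -/
def appT (s t : ATerm C) : ATerm C :=
  .app none (fun i => if i.1 = 0 then s else t)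

/-- The applicative constant `c` (i.e. `c_0`). -/
def constT (c : C) : ATerm C :=
  .app (some (c, 0)) (fun i => (Nat.not_lt_zero _ i.isLt).elim)

/-- Symbols of a purely applicative term: only `∘` and constants `c_0`. -/
def ApplicativeSym : USig C → Prop
  | none => True
  | some (_, i) => i = 0

/-- A term over the applicative signature (constants plus `∘`). -/
def ApplicativeT (t : ATerm C) : Prop :=
  ∀ (u : ATerm C) (f : USig C) (ts : Fin (uar f) → ATerm C),
    Subterm u t → u = Term.app f ts → ApplicativeSym f

/-- `headCount t = some (c, n)` iff `t = c ∘ t₁ ∘ ⋯ ∘ tₙ` for some terms `tᵢ`. -/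
def headCount : ATerm C → Option (C × ℕ)
  | .var _ => none
  | .app none ts => (headCount (ts ⟨0, by simp [uar]⟩)).map (fun p => (p.1, p.2 + 1))
  | .app (some (_, _ + 1)) _ => none
  | .app (some (c, 0)) _ => some (c, 0)

/-- The spine `c ∘ t₁ ∘ ⋯ ∘ tₙ` occurs as a subterm of a left- or
right-hand side of `R`. -/
def SpineIn (R : Set (ATerm C × ATerm C)) (c : C) (n : ℕ) : Prop :=
  ∃ p ∈ R, ∃ t : ATerm C, (Subterm t p.1 ∨ Subterm t p.2) ∧ headCount t = some (c, n)

/-- `aa` is the applicative-arity function of `R`: `aa c` is the maximal `n`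
such that `c ∘ t₁ ∘ ⋯ ∘ tₙ` occurs in a rule of `R` (and `0` if `c` does not
occur applied). -/
def AASpec (R : Set (ATerm C × ATerm C)) (aa : C → ℕ) : Prop :=
  ∀ c : C, (∀ n, SpineIn R c n → n ≤ aa c) ∧ (aa c = 0 ∨ SpineIn R c (aa c))

/-- A term is head variable free if no subterm is of the form `x ∘ v` with
`x` a variable. -/
def HeadVarFree (t : ATerm C) : Prop :=
  ∀ u : ATerm C, Subterm u t → ∀ (x : ℕ) (v : ATerm C), u ≠ appT (.var x) v

/-- Basic well-formedness of an applicative TRS: left-hand sides are not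
variables, right-hand side variables occur on the left, and both sides are
applicative terms. -/
def IsATRS (R : Set (ATerm C × ATerm C)) : Prop :=
  ∀ p ∈ R, (∀ x : ℕ, p.1 ≠ Term.var x) ∧
    (∀ x : ℕ, Subterm (.var x) p.2 → Subterm (.var x) p.1) ∧
    ApplicativeT p.1 ∧ ApplicativeT p.2

/-- `R` is left head variable free. -/
def LHVF (R : Set (ATerm C × ATerm C)) : Prop := ∀ p ∈ R, HeadVarFree p.1

/-- The variables `x_0, …, x_{i-1}`. -/
def uvars (i : ℕ) : Fin i → ATerm C := fun j => .var j.1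

/-- The term `f_i(x_0,…,x_{i-1})`. -/
def fiT (c : C) (i : ℕ) : ATerm C := .app (some (c, i)) (fun j => .var j.1)

/-- The uncurrying system `U`, with rules
`c_i(x_1,…,x_i) ∘ y → c_{i+1}(x_1,…,x_i,y)` for all `0 ≤ i < aa c`. -/
def USys (aa : C → ℕ) : Set (ATerm C × ATerm C) :=
  { p | ∃ (c : C) (i : ℕ), i < aa c ∧
      p = (appT (fiT c i) (.var i), fiT c (i + 1)) }

/-- The currying system `C(F)` (for a signature with arities `arF`), with
rules `f_{i+1}(x_1,…,x_i,y) → f_i(x_1,…,x_i) ∘ y` for all `0 ≤ i < arF f`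
(where `f_{arF f}` plays the role of `f`). -/
def CurrySys {F : Type} (arF : F → ℕ) : Set (ATerm F × ATerm F) :=
  { p | ∃ (f : F) (i : ℕ), i < arF f ∧
      p = (fiT f (i + 1), appT (fiT f i) (.var i)) }

/-- The η-saturation `R_η` of `R` (w.r.t. applicative arities `aa`). -/
inductive Eta (aa : C → ℕ) (R : Set (ATerm C × ATerm C)) : ATerm C × ATerm C → Prop where
  | base (p) : p ∈ R → Eta aa R p
  | eta (l r : ATerm C) (c : C) (n x : ℕ) :
      Eta aa R (l, r) → headCount l = some (c, n) → n < aa c →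
      ¬ Subterm (.var x) l → ¬ Subterm (.var x) r →
      Eta aa R (appT l (.var x), appT r (.var x))

/-- The uncurried system `R_η↓`: the rules of `R_η` with both sides in
`U`-normal form. -/
def EtaDown (aa : C → ℕ) (R : Set (ATerm C × ATerm C)) : Set (ATerm C × ATerm C) :=
  { p | ∃ l r : ATerm C, Eta aa R (l, r) ∧
      NormTo (USys aa) l p.1 ∧ NormTo (USys aa) r p.2 }

/-- The transformed system `U↓(R) = R_η↓ ∪ U(R)`. -/
def UD (aa : C → ℕ) (R : Set (ATerm C × ATerm C)) : Set (ATerm C × ATerm C) :=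
  EtaDown aa R ∪ USys aa

/-- Symbols of the signature of `U↓(R)`: `∘` and `c_i` with `i ≤ aa c`. -/
def GoodSym (aa : C → ℕ) : USig C → Prop
  | none => True
  | some (c, i) => i ≤ aa c

/-- A term over the signature of `U↓(R)`. -/
def GoodTerm (aa : C → ℕ) (t : ATerm C) : Prop :=
  ∀ (u : ATerm C) (f : USig C) (ts : Fin (uar f) → ATerm C),
    Subterm u t → u = Term.app f ts → GoodSym aa f

/-- `C'`: curry a term over the signature of `U↓(R)` and identify all
symbols `c_i` originating from the same constant `c`. -/
def curryId : ATerm C → ATerm C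
  | .var x => .var x
  | .app none ts => appT (curryId (ts ⟨0, by simp [uar]⟩)) (curryId (ts ⟨1, by simp [uar]⟩))
  | .app (some (c, i)) ts =>
      (List.ofFn (fun j : Fin (uar (some (c, i))) => curryId (ts j))).foldl appT (constT c)

end ATRS

/-- The constants of the concrete example. -/
inductive FS : Type where
  | f : FS
  | s : FS

/-- The constant `f`. -/
def fT : ATerm FS := constT FS.f
/-- The constant `s`. -/
def sT : ATerm FS := constT FS.s
/-- The term `f₁(t)`. -/
def f1T (t : ATerm FS) : ATerm FS := Term.app (some (FS.f, 1)) (fun _ => t)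
/-- The term `s₁(t)`. -/
def s1T (t : ATerm FS) : ATerm FS := Term.app (some (FS.s, 1)) (fun _ => t)

/-- The ATRS `R = {f → s, f ∘ (s ∘ x) → s ∘ (s ∘ (f ∘ x))}`. -/
def Rfs : Set (ATerm FS × ATerm FS) :=
  {(fT, sT),
   (appT fT (appT sT (.var 0)), appT sT (appT sT (appT fT (.var 0))))}

/-- The TRS `U↓(R) = {f → s, f₁(x) → s₁(x), f₁(s₁(x)) → s₁(s₁(f₁(x))),
f ∘ x → f₁(x), s ∘ x → s₁(x)}`. -/
def UDfs : Set (ATerm FS × ATerm FS) :=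
  {(fT, sT),
   (f1T (.var 0), s1T (.var 0)),
   (f1T (s1T (.var 0)), s1T (s1T (f1T (.var 0)))),
   (appT fT (.var 0), f1T (.var 0)),
   (appT sT (.var 0), s1T (.var 0))}

/-- Applicative arities of the example: `aa f = aa s = 1`. -/
def aaFS : FS → ℕ := fun _ => 1

section Aux

/-! ### Generic lemmas about `RelPow` -/

lemma relpow_trans {α} {r : α → α → Prop} :
    ∀ {m : ℕ} {a : α} {k : ℕ} {b c : α}, RelPow r m a b → RelPow r k b c →
      RelPow r (m + k) a c := by
  intro m
  induction m with
  | zero =>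
    intro a k b c h1 h2
    have h : a = b := h1
    rw [Nat.zero_add, h]; exact h2
  | succ m ih =>
    intro a k b c h1 h2
    obtain ⟨d, hd, h1'⟩ := h1
    have e : m + 1 + k = (m + k) + 1 := by omega
    rw [e]
    exact ⟨d, hd, ih h1' h2⟩

lemma relpow_map {α} {r : α → α → Prop} (g : α → α)
    (hg : ∀ x y, r x y → r (g x) (g y)) :
    ∀ {m : ℕ} {a b : α}, RelPow r m a b → RelPow r m (g a) (g b) := by
  intro m
  induction m with
  | zero =>
    intro a b h
    have h : a = b := h
    show g a = g b
    rw [h]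
  | succ m ih =>
    intro a b h
    obtain ⟨d, hd, h'⟩ := h
    exact ⟨g d, hg _ _ hd, ih h'⟩

lemma relpow_prefix {α} {r : α → α → Prop} :
    ∀ {m : ℕ} {a b : α} {k : ℕ}, RelPow r m a b → k ≤ m → ∃ c, RelPow r k a c := by
  intro m
  induction m with
  | zero =>
    intro a b k h hk
    have : k = 0 := Nat.le_zero.mp hk
    subst this
    exact ⟨a, rfl⟩
  | succ m ih =>
    intro a b k h hk
    cases k with
    | zero => exact ⟨a, rfl⟩
    | succ k =>
      obtain ⟨d, hd, h'⟩ := h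
      obtain ⟨c, hc⟩ := ih h' (Nat.succ_le_succ_iff.mp hk)
      exact ⟨c, d, hd, hc⟩

lemma relpow_le_measure {α} {r : α → α → Prop} (g : α → ℕ)
    (hg : ∀ a b, r a b → g b < g a) :
    ∀ {m : ℕ} {a b : α}, RelPow r m a b → m ≤ g a := by
  intro m
  induction m with
  | zero => intro a b _; exact Nat.zero_le _
  | succ m ih =>
    intro a b h
    obtain ⟨d, hd, h'⟩ := h
    have h1 := hg _ _ hd
    have h2 := ih h'
    omega

lemma dh_le {α} {r : α → α → Prop} {t : α} {B : ℕ}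
    (h : ∀ m u, RelPow r m t u → m ≤ B) : dh r t ≤ B :=
  csSup_le' (by rintro m ⟨u, hu⟩; exact h m u hu)

/-! ### Inversion lemmas -/

lemma rew_inv {F V : Type} {ar : F → ℕ} {R : Set (Term F ar V × Term F ar V)}
    {t u : Term F ar V} (h : Rew R t u) :
    (∃ l r σ, (l, r) ∈ R ∧ t = l.subst σ ∧ u = r.subst σ) ∨
    (∃ f ts i v, Rew R (ts i) v ∧ t = Term.app f ts ∧
      u = Term.app f (Function.update ts i v)) := by
  cases h with
  | rule l r σ hm => exact Or.inl ⟨l, r, σ, hm, rfl, rfl⟩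
  | congr f ts i v hv => exact Or.inr ⟨f, ts, i, v, hv, rfl, rfl⟩

lemma subterm_inv {F V : Type} {ar : F → ℕ} {u t : Term F ar V} (h : Subterm u t) :
    u = t ∨ ∃ f ts i, t = Term.app f ts ∧ Subterm u (ts i) := by
  cases h with
  | refl => exact Or.inl rfl
  | app f ts i u h => exact Or.inr ⟨f, ts, i, rfl, h⟩

lemma subterm_trans {F V : Type} {ar : F → ℕ} {v u t : Term F ar V}
    (h2 : Subterm u t) : Subterm v u → Subterm v t := by
  induction h2 with
  | refl => exact id
  | app f ts i w hw ih => exact fun h1 => Subterm.app f ts i v (ih h1)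

lemma irew_to_rew {F V : Type} {ar : F → ℕ} {R : Set (Term F ar V × Term F ar V)}
    {t u : Term F ar V} (h : IRew R t u) : Rew R t u := by
  induction h with
  | rule l r σ hm _ => exact Rew.rule l r σ hm
  | congr f ts i u _ ih => exact Rew.congr f ts i u ih

/-! ### Substitution computation -/

@[simp] lemma uar_none : uar (none : USig FS) = 2 := rfl
@[simp] lemma uar_some (c : FS) (i : ℕ) : uar (some (c, i)) = i := rfl

@[simp] lemma var_subst (σ : ℕ → ATerm FS) (x : ℕ) : (Term.var x).subst σ = σ x := rfl

@[simp] lemma constT_subst (σ : ℕ → ATerm FS) (c : FS) :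
    (constT c).subst σ = constT c := by
  simp only [constT, Term.subst]
  congr 1
  funext i
  have h : (i : ℕ) < 0 := by simpa using i.isLt
  exact absurd h (Nat.not_lt_zero _)

@[simp] lemma fT_subst (σ : ℕ → ATerm FS) : fT.subst σ = fT := constT_subst σ FS.f
@[simp] lemma sT_subst (σ : ℕ → ATerm FS) : sT.subst σ = sT := constT_subst σ FS.s

@[simp] lemma f1T_subst (σ : ℕ → ATerm FS) (t : ATerm FS) :
    (f1T t).subst σ = f1T (t.subst σ) := rfl

@[simp] lemma s1T_subst (σ : ℕ → ATerm FS) (t : ATerm FS) :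
    (s1T t).subst σ = s1T (t.subst σ) := rfl

@[simp] lemma appT_subst (σ : ℕ → ATerm FS) (a b : ATerm FS) :
    (appT a b).subst σ = appT (a.subst σ) (b.subst σ) := by
  simp only [appT, Term.subst]
  congr 1
  funext i
  by_cases h : (i : ℕ) = 0 <;> simp [h]

/-! ### Fin helpers -/

lemma fin1_eq (c : FS) (i : Fin (uar (some (c, 1)))) : i = ⟨0, by simp⟩ := by
  have h : (i : ℕ) < 1 := i.isLt
  exact Fin.ext ((by omega : (i : ℕ) = 0))

lemma update_fin1 {c : FS} (a b : ATerm FS) (i : Fin (uar (some (c, 1)))) :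
    Function.update (fun _ : Fin (uar (some (c, 1))) => a) i b = fun _ => b := by
  funext j
  rw [fin1_eq c i, fin1_eq c j, Function.update_self]

lemma sum_fin1 (c : FS) (g : Fin (uar (some (c, 1))) → ℕ) :
    ∑ i, g i = g ⟨0, by simp⟩ := Fin.sum_univ_one g

lemma sum_fin0 (c : FS) (g : Fin (uar (some (c, 0))) → ℕ) :
    ∑ i, g i = 0 := Fin.sum_univ_zero g

lemma sum_fin2 (g : Fin (uar (none : USig FS)) → ℕ) :
    ∑ i, g i = g ⟨0, by simp⟩ + g ⟨1, by simp⟩ := Fin.sum_univ_two g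

end Aux

section Chains

/-! ### Normal forms of `s₁`-towers -/

lemma tower_sub : ∀ (j : ℕ) (u : ATerm FS), Subterm u (s1T^[j] (Term.var 0)) →
    ∃ i, i ≤ j ∧ u = s1T^[i] (Term.var 0) := by
  intro j
  induction j with
  | zero =>
    intro u h
    rcases subterm_inv h with h | ⟨f, ts, i, heq, _⟩
    · exact ⟨0, le_refl 0, h⟩
    · simp at heq
  | succ j ih =>
    intro u h
    rw [Function.iterate_succ_apply'] at h
    rcases subterm_inv h with h | ⟨f, ts, i, heq, hsub⟩
    · exact ⟨j + 1, le_refl _, by rw [Function.iterate_succ_apply']; exact h⟩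
    · simp only [s1T] at heq
      injection heq with h1 h2
      subst h1
      rw [← eq_of_heq h2] at hsub
      obtain ⟨i', hi', hu⟩ := ih u hsub
      exact ⟨i', Nat.le_succ_of_le hi', hu⟩

lemma nf_tower : ∀ j : ℕ, NF UDfs (s1T^[j] (Term.var 0)) := by
  intro j
  induction j with
  | zero =>
    intro u h
    rcases rew_inv h with ⟨l, r, σ, hm, ht, _⟩ | ⟨f, ts, i, v, _, ht, _⟩
    · simp only [UDfs, Set.mem_insert_iff, Set.mem_singleton_iff, Prod.mk.injEq] at hm
      rcases hm with ⟨hl, hr⟩ | ⟨hl, hr⟩ | ⟨hl, hr⟩ | ⟨hl, hr⟩ | ⟨hl, hr⟩ <;> subst hl <;>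
        simp [fT, sT, f1T, s1T, appT, constT, Term.subst] at ht
    · simp at ht
  | succ j ih =>
    intro u h
    rw [Function.iterate_succ_apply'] at h
    rcases rew_inv h with ⟨l, r, σ, hm, ht, _⟩ | ⟨f, ts, i, v, hv, ht, _⟩
    · simp only [UDfs, Set.mem_insert_iff, Set.mem_singleton_iff, Prod.mk.injEq] at hm
      rcases hm with ⟨hl, hr⟩ | ⟨hl, hr⟩ | ⟨hl, hr⟩ | ⟨hl, hr⟩ | ⟨hl, hr⟩ <;> subst hl <;>
        simp [fT, sT, f1T, s1T, appT, constT, Term.subst] at ht <;>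
        (injection ht with h1 h2; simp at h1)
    · simp only [s1T] at ht
      injection ht with h1 h2
      subst h1
      rw [← eq_of_heq h2] at hv
      exact ih v hv

lemma nf_tower_sub (j : ℕ) : ∀ u, Subterm u (s1T^[j] (Term.var 0)) → NF UDfs u := by
  intro u h
  obtain ⟨i, _, rfl⟩ := tower_sub j u h
  exact nf_tower i

/-! ### Innermost steps -/

lemma psub_unary {c : FS} {t u : ATerm FS}
    (h : PSub u (Term.app (some (c, 1)) (fun _ => t))) : Subterm u t := by
  obtain ⟨f, ts, i, heq, hsub⟩ := h
  injection heq with h1 h2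
  subst h1
  rw [← eq_of_heq h2] at hsub
  exact hsub

lemma irew2 (t : ATerm FS) (hnf : ∀ u, Subterm u t → NF UDfs u) :
    IRew UDfs (f1T t) (s1T t) := by
  have key := IRew.rule (R := UDfs) (f1T (.var 0)) (s1T (.var 0)) (fun _ => t)
    (by simp [UDfs]) (fun u hp => hnf u (psub_unary hp))
  exact key

lemma irew3 (t : ATerm FS) (hnf : ∀ u, Subterm u (s1T t) → NF UDfs u) :
    IRew UDfs (f1T (s1T t)) (s1T (s1T (f1T t))) := by
  have key := IRew.rule (R := UDfs) (f1T (s1T (.var 0))) (s1T (s1T (f1T (.var 0))))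
    (fun _ => t) (by simp [UDfs]) (fun u hp => hnf u (psub_unary hp))
  exact key

lemma irew_s1 {a b : ATerm FS} (h : IRew UDfs a b) : IRew UDfs (s1T a) (s1T b) := by
  have h' := IRew.congr (R := UDfs) (some (FS.s, 1)) (fun _ => a) ⟨0, by simp⟩ b h
  rw [update_fin1] at h'
  exact h'

lemma irew_f1 {a b : ATerm FS} (h : IRew UDfs a b) : IRew UDfs (f1T a) (f1T b) := by
  have h' := IRew.congr (R := UDfs) (some (FS.f, 1)) (fun _ => a) ⟨0, by simp⟩ b h
  rw [update_fin1] at h'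
  exact h'

lemma irew_f1_iter (m : ℕ) {a b : ATerm FS} (h : IRew UDfs a b) :
    IRew UDfs (f1T^[m] a) (f1T^[m] b) := by
  induction m with
  | zero => exact h
  | succ m ih =>
    rw [Function.iterate_succ_apply', Function.iterate_succ_apply']
    exact irew_f1 ih

/-! ### The exponential innermost derivation -/

lemma inner_chain : ∀ K : ℕ, RelPow (IRew UDfs) (K + 2)
    (f1T (s1T^[K+1] (Term.var 0))) (s1T^[2*K+3] (Term.var 0)) := by
  intro K
  induction K with
  | zero =>
    have hnf1 : ∀ u, Subterm u (s1T (Term.var 0)) → NF UDfs u := fun u hu =>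
      nf_tower_sub 1 u hu
    have hnf0 : ∀ u, Subterm u (Term.var 0) → NF UDfs u := fun u hu =>
      nf_tower_sub 0 u hu
    refine ⟨s1T (s1T (f1T (Term.var 0))), irew3 (Term.var 0) hnf1,
           s1T (s1T (s1T (Term.var 0))), irew_s1 (irew_s1 (irew2 (Term.var 0) hnf0)), ?_⟩
    show s1T (s1T (s1T (Term.var 0))) = s1T^[2*0+3] (Term.var 0)
    norm_num [Function.iterate_succ_apply']
  | succ K ih =>
    have hnf : ∀ u, Subterm u (s1T (s1T^[K+1] (Term.var 0))) → NF UDfs u := by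
      intro u hu
      exact nf_tower_sub (K+2) u (by rwa [Function.iterate_succ_apply'])
    refine ⟨s1T (s1T (f1T (s1T^[K+1] (Term.var 0)))), ?_, ?_⟩
    · have h3 := irew3 (s1T^[K+1] (Term.var 0)) hnf
      have e : s1T^[K+1+1] (Term.var 0) = s1T (s1T^[K+1] (Term.var 0)) :=
        Function.iterate_succ_apply' _ _ _
      rw [e]
      exact h3
    · have h2 := relpow_map (fun t => s1T (s1T t))
        (fun x y h => irew_s1 (irew_s1 h)) ih
      have e : s1T (s1T (s1T^[2*K+3] (Term.var 0))) = s1T^[2*(K+1)+3] (Term.var 0) := by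
        have e2 : 2*(K+1)+3 = (2*K+3) + 1 + 1 := by omega
        conv_rhs => rw [e2, Function.iterate_succ_apply', Function.iterate_succ_apply']
      rw [← e]
      exact h2

lemma main_chain : ∀ (n K : ℕ), RelPow (IRew UDfs) (2^n * (K+2) - (K+2))
    (f1T^[n] (s1T^[K+1] (Term.var 0))) (s1T^[2^n * (K+2) - 1] (Term.var 0)) := by
  intro n
  induction n with
  | zero =>
    intro K
    have e1 : 2^0 * (K+2) - (K+2) = 0 := by norm_num
    have e2 : 2^0 * (K+2) - 1 = K+1 := by norm_num
    rw [e1, e2]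
    exact rfl
  | succ n ih =>
    intro K
    have h1 : RelPow (IRew UDfs) (K+2) (f1T^[n] (f1T (s1T^[K+1] (Term.var 0))))
        (f1T^[n] (s1T^[2*K+3] (Term.var 0))) :=
      relpow_map (f1T^[n]) (fun x y h => irew_f1_iter n h) (inner_chain K)
    have h2 := ih (2*K+2)
    have estart : f1T^[n] (s1T^[2*K+3] (Term.var 0))
        = f1T^[n] (s1T^[2*K+2+1] (Term.var 0)) := by norm_num
    rw [estart] at h1
    have h3 := relpow_trans h1 h2
    have ha : K+2 ≤ 2^n*(K+2) := Nat.le_mul_of_pos_left _ (by positivity)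
    have e : 2^n*(2*K+2+2) = 2*(2^n*(K+2)) := by ring
    have e2 : 2^(n+1)*(K+2) = 2*(2^n*(K+2)) := by rw [pow_succ]; ring
    have ec : (K+2) + (2^n*(2*K+2+2) - (2*K+2+2)) = 2^(n+1) * (K+2) - (K+2) := by omega
    have ee : 2^n*(2*K+2+2) - 1 = 2^(n+1)*(K+2) - 1 := by omega
    rw [ec, ee] at h3
    rw [Function.iterate_succ_apply]
    exact h3

lemma derivation (n : ℕ) (hn : 1 ≤ n) :
    ∃ u, RelPow (IRew UDfs) (2^n) (f1T^[n] (s1T (Term.var 0))) u := by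
  have h := main_chain n 0
  have hle : 2^n ≤ 2^n * (0+2) - (0+2) := by
    have h2 : 2 ≤ 2^n := by
      calc 2 = 2^1 := rfl
      _ ≤ 2^n := Nat.pow_le_pow_right (by norm_num) hn
    omega
  obtain ⟨u, hu⟩ := relpow_prefix h hle
  exact ⟨u, hu⟩

end Chains

section Interp

/-- Polynomial interpretation showing termination of `UDfs` with an
exponential bound. -/
def Iv : ATerm FS → ℕ
  | .var _ => 1
  | .app none ts => (Iv (ts ⟨0, by simp⟩) + 3) * (Iv (ts ⟨1, by simp⟩) + 1)
  | .app (some (FS.f, 0)) _ => 2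
  | .app (some (FS.s, 0)) _ => 1
  | .app (some (FS.f, 1)) ts => 3 * Iv (ts ⟨0, by simp⟩) + 3
  | .app (some (FS.s, 1)) ts => Iv (ts ⟨0, by simp⟩) + 1
  | .app (some (_, _+2)) ts => 1 + ∑ i, Iv (ts i)

@[simp] lemma Iv_var (x : ℕ) : Iv (Term.var x) = 1 := rfl

@[simp] lemma Iv_fT : Iv fT = 2 := by simp [fT, constT, Iv]

@[simp] lemma Iv_sT : Iv sT = 1 := by simp [sT, constT, Iv]

@[simp] lemma Iv_f1T (t : ATerm FS) : Iv (f1T t) = 3 * Iv t + 3 := by simp [f1T, Iv]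

@[simp] lemma Iv_s1T (t : ATerm FS) : Iv (s1T t) = Iv t + 1 := by simp [s1T, Iv]

@[simp] lemma Iv_appT (a b : ATerm FS) : Iv (appT a b) = (Iv a + 3) * (Iv b + 1) := by
  simp [appT, Iv]

lemma Iv_mono (f : USig FS) (ts : Fin (uar f) → ATerm FS) (i : Fin (uar f))
    (u : ATerm FS) (h : Iv u < Iv (ts i)) :
    Iv (Term.app f (Function.update ts i u)) < Iv (Term.app f ts) := by
  match f with
  | none =>
    rcases i with ⟨iv, hi⟩
    have hi2 : iv < 2 := hi
    simp only [Iv]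
    interval_cases iv
    · rw [show (Function.update ts ⟨0, hi⟩ u) ⟨0, by simp⟩ = u by
        exact Function.update_self _ _ _]
      rw [show (Function.update ts ⟨0, hi⟩ u) ⟨1, by simp⟩ = ts ⟨1, by simp⟩ by
        exact Function.update_of_ne (Fin.ne_of_val_ne (Nat.succ_ne_zero 0)) _ _]
      have h' : Iv u < Iv (ts ⟨0, by simp⟩) := h
      exact Nat.mul_lt_mul_of_lt_of_le (by omega) (le_refl _) (by omega)
    · rw [show (Function.update ts ⟨1, hi⟩ u) ⟨0, by simp⟩ = ts ⟨0, by simp⟩ by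
        exact Function.update_of_ne (Fin.ne_of_val_ne (Nat.succ_ne_zero 0).symm) _ _]
      rw [show (Function.update ts ⟨1, hi⟩ u) ⟨1, by simp⟩ = u by
        exact Function.update_self _ _ _]
      have h' : Iv u < Iv (ts ⟨1, by simp⟩) := h
      exact Nat.mul_lt_mul_of_le_of_lt (le_refl _) (by omega) (by omega)
  | some (FS.f, 0) => exact absurd i.isLt (by simp)
  | some (FS.s, 0) => exact absurd i.isLt (by simp)
  | some (FS.f, 1) =>
    simp only [Iv]
    rw [fin1_eq FS.f i] at h
    rw [show (Function.update ts i u) ⟨0, by simp⟩ = u by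
      rw [fin1_eq FS.f i]; exact Function.update_self _ _ _]
    omega
  | some (FS.s, 1) =>
    simp only [Iv]
    rw [fin1_eq FS.s i] at h
    rw [show (Function.update ts i u) ⟨0, by simp⟩ = u by
      rw [fin1_eq FS.s i]; exact Function.update_self _ _ _]
    omega
  | some (c, n+2) =>
    simp only [Iv]
    have e : ∀ j, Iv (Function.update ts i u j)
        = Function.update (fun k => Iv (ts k)) i (Iv u) j :=
      fun j => Function.apply_update (fun _ t => Iv t) ts i u j
    rw [Finset.sum_congr rfl (fun j _ => e j),
        Finset.sum_update_of_mem (Finset.mem_univ i),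
        Finset.sum_eq_add_sum_sdiff_singleton_of_mem (Finset.mem_univ i) (fun k => Iv (ts k))]
    omega

lemma rew_dec {t u : ATerm FS} (h : Rew UDfs t u) : Iv u < Iv t := by
  induction h with
  | rule l r σ hm =>
    simp only [UDfs, Set.mem_insert_iff, Set.mem_singleton_iff, Prod.mk.injEq] at hm
    rcases hm with ⟨hl, hr⟩ | ⟨hl, hr⟩ | ⟨hl, hr⟩ | ⟨hl, hr⟩ | ⟨hl, hr⟩ <;>
      subst hl <;> subst hr <;> simp <;> omega
  | congr f ts i u hu ih => exact Iv_mono f ts i u ih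

lemma relpow_le_Iv {m : ℕ} {t u : ATerm FS} (h : RelPow (IRew UDfs) m t u) :
    m ≤ Iv t :=
  relpow_le_measure Iv (fun _ _ hab => rew_dec (irew_to_rew hab)) h

lemma dh_ge {t u : ATerm FS} {m : ℕ} (h : RelPow (IRew UDfs) m t u) :
    m ≤ dh (IRew UDfs) t :=
  le_csSup ⟨Iv t, by rintro k ⟨w, hw⟩; exact relpow_le_Iv hw⟩ ⟨u, h⟩

end Interp

section SizeBound

lemma size_pos {F V : Type} {ar : F → ℕ} (t : Term F ar V) : 1 ≤ t.size := by
  cases t <;> simp [Term.size]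

lemma good_sub {aa : FS → ℕ} {t u : ATerm FS} (hg : GoodTerm aa t)
    (hs : Subterm u t) : GoodTerm aa u :=
  fun v f ts hv he => hg v f ts (subterm_trans hs hv) he

lemma Iv_le : ∀ {t : ATerm FS}, GoodTerm aaFS t → Iv t ≤ 5 ^ t.size := by
  intro t
  induction t with
  | var x => intro _; simp [Term.size]
  | app f ts ih =>
    intro hg
    have hgood : GoodSym aaFS f := hg _ f ts (Subterm.refl _) rfl
    have hsub : ∀ i, GoodTerm aaFS (ts i) := fun i =>
      good_sub hg (Subterm.app f ts i _ (Subterm.refl _))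
    match f with
    | none =>
      have h0 := ih ⟨0, by simp⟩ (hsub _)
      have h1 := ih ⟨1, by simp⟩ (hsub _)
      have s0 := size_pos (ts ⟨0, by simp⟩)
      have s1 := size_pos (ts ⟨1, by simp⟩)
      have hA : 5 ≤ 5 ^ (ts ⟨0, by simp⟩).size := by
        calc 5 = 5^1 := by norm_num
        _ ≤ _ := Nat.pow_le_pow_right (by norm_num) s0
      have hB : 5 ≤ 5 ^ (ts ⟨1, by simp⟩).size := by
        calc 5 = 5^1 := by norm_num
        _ ≤ _ := Nat.pow_le_pow_right (by norm_num) s1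
      rw [Iv]
      simp only [Term.size]
      rw [sum_fin2 (fun i => (ts i).size)]
      rw [show 1 + ((ts ⟨0, by simp⟩).size + (ts ⟨1, by simp⟩).size)
          = (ts ⟨0, by simp⟩).size + ((ts ⟨1, by simp⟩).size + 1) by omega]
      rw [pow_add, pow_add, pow_one]
      calc (Iv (ts ⟨0, by simp⟩) + 3) * (Iv (ts ⟨1, by simp⟩) + 1)
          ≤ (2 * 5 ^ (ts ⟨0, by simp⟩).size) * (2 * 5 ^ (ts ⟨1, by simp⟩).size) :=
            Nat.mul_le_mul (by omega) (by omega)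
        _ ≤ 5 ^ (ts ⟨0, by simp⟩).size * (5 ^ (ts ⟨1, by simp⟩).size * 5) := by
            nlinarith [hA, hB]
    | some (FS.f, 0) =>
      have hs : ∑ i, (ts i).size = 0 := sum_fin0 FS.f _
      rw [Iv]
      simp only [Term.size, hs]
      norm_num
    | some (FS.s, 0) =>
      have hs : ∑ i, (ts i).size = 0 := sum_fin0 FS.s _
      rw [Iv]
      simp only [Term.size, hs]
      norm_num
    | some (FS.f, 1) =>
      have h0 := ih ⟨0, by simp⟩ (hsub _)
      have s0 := size_pos (ts ⟨0, by simp⟩)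
      have hA : 5 ≤ 5 ^ (ts ⟨0, by simp⟩).size := by
        calc 5 = 5^1 := by norm_num
        _ ≤ _ := Nat.pow_le_pow_right (by norm_num) s0
      rw [Iv]
      simp only [Term.size]
      rw [sum_fin1 FS.f (fun i => (ts i).size), pow_add, pow_one]
      omega
    | some (FS.s, 1) =>
      have h0 := ih ⟨0, by simp⟩ (hsub _)
      have s0 := size_pos (ts ⟨0, by simp⟩)
      have hA : 5 ≤ 5 ^ (ts ⟨0, by simp⟩).size := by
        calc 5 = 5^1 := by norm_num
        _ ≤ _ := Nat.pow_le_pow_right (by norm_num) s0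
      rw [Iv]
      simp only [Term.size]
      rw [sum_fin1 FS.s (fun i => (ts i).size), pow_add, pow_one]
      omega
    | some (c, n+2) =>
      exfalso
      have : n + 2 ≤ aaFS c := hgood
      simp [aaFS] at this

/-! ### The starting terms -/

lemma sub_start : ∀ (n : ℕ) (u : ATerm FS),
    Subterm u (f1T^[n] (s1T (Term.var 0))) →
    (∃ i, u = f1T^[i] (s1T (Term.var 0))) ∨ u = Term.var 0 := by
  intro n
  induction n with
  | zero =>
    intro u h
    obtain ⟨i, hi, hu⟩ := tower_sub 1 u h
    interval_cases i
    · exact Or.inr hu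
    · exact Or.inl ⟨0, hu⟩
  | succ n ih =>
    intro u h
    rw [Function.iterate_succ_apply'] at h
    rcases subterm_inv h with rfl | ⟨f, ts, i, heq, hsub⟩
    · exact Or.inl ⟨n+1, by rw [Function.iterate_succ_apply']⟩
    · simp only [f1T] at heq
      injection heq with h1 h2
      subst h1
      rw [← eq_of_heq h2] at hsub
      exact ih u hsub

lemma good_start (n : ℕ) : GoodTerm aaFS (f1T^[n] (s1T (Term.var 0))) := by
  intro u f ts hsub heq
  rcases sub_start n u hsub with ⟨i, rfl⟩ | rfl
  · cases i with
    | zero =>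
      simp only [Function.iterate_zero, id_def, s1T] at heq
      injection heq with h1 h2
      subst h1
      simp [GoodSym, aaFS]
    | succ i =>
      rw [Function.iterate_succ_apply'] at heq
      simp only [f1T] at heq
      injection heq with h1 h2
      subst h1
      simp [GoodSym, aaFS]
  · cases heq

lemma size_s1T (t : ATerm FS) : (s1T t).size = 1 + t.size := by
  simp only [s1T, Term.size]
  rw [sum_fin1 FS.s (fun i => t.size)]

lemma size_f1T (t : ATerm FS) : (f1T t).size = 1 + t.size := by
  simp only [f1T, Term.size]
  rw [sum_fin1 FS.f (fun i => t.size)]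

lemma size_start : ∀ n : ℕ, (f1T^[n] (s1T (Term.var 0))).size = n + 2 := by
  intro n
  induction n with
  | zero =>
    show (s1T (Term.var 0)).size = 2
    rw [size_s1T]
    simp [Term.size]
  | succ n ih =>
    rw [Function.iterate_succ_apply', size_f1T, ih]
    omega

lemma part2 (n : ℕ) : 2^n ≤ dcOn (IRew UDfs) (GoodTerm aaFS) (n+3) := by
  set m := max n 1 with hm
  have hm1 : 1 ≤ m := le_max_right _ _
  have hmn : n ≤ m := le_max_left _ _
  have hmn1 : m ≤ n + 1 := by omega
  have hchain := main_chain m 0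
  have hle : 2^n ≤ 2^m * (0+2) - (0+2) := by
    have h1 : 2^n ≤ 2^m := Nat.pow_le_pow_right (by norm_num) hmn
    have h2 : 2 ≤ 2^m := by
      calc 2 = 2^1 := rfl
      _ ≤ 2^m := Nat.pow_le_pow_right (by norm_num) hm1
    omega
  obtain ⟨u, hu⟩ := relpow_prefix hchain hle
  have hdh : 2^n ≤ dh (IRew UDfs) (f1T^[m] (s1T (Term.var 0))) := dh_ge hu
  refine le_trans hdh (le_csSup ?_ ?_)
  · refine ⟨5^(n+3), ?_⟩
    rintro k ⟨t, hg, hs, rfl⟩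
    calc dh (IRew UDfs) t ≤ Iv t := dh_le (fun _ _ h => relpow_le_Iv h)
      _ ≤ 5 ^ t.size := Iv_le hg
      _ ≤ 5 ^ (n+3) := Nat.pow_le_pow_right (by norm_num) hs
  · exact ⟨f1T^[m] (s1T (.var 0)), good_start m, by rw [size_start]; omega, rfl⟩

end SizeBound

section Linear

/-- Counting occurrences of the constant `f`. -/
def jhead : USig FS → ℕ
  | some (FS.f, 0) => 1
  | _ => 0

def Jv : ATerm FS → ℕ
  | .var _ => 0
  | .app f ts => jhead f + ∑ i, Jv (ts i)

lemma jhead_le (f : USig FS) : jhead f ≤ 1 := by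
  rcases f with _ | ⟨c, j⟩
  · simp [jhead]
  · rcases c <;> rcases j with _ | j <;> simp [jhead]

@[simp] lemma Jv_fT : Jv fT = 1 := by
  simp [fT, constT, Jv, jhead]

@[simp] lemma Jv_sT : Jv sT = 0 := by
  simp [sT, constT, Jv, jhead]

lemma Jv_mono (f : USig FS) (ts : Fin (uar f) → ATerm FS) (i : Fin (uar f))
    (u : ATerm FS) (h : Jv u < Jv (ts i)) :
    Jv (Term.app f (Function.update ts i u)) < Jv (Term.app f ts) := by
  simp only [Jv]
  have e : ∀ j, Jv (Function.update ts i u j)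
      = Function.update (fun k => Jv (ts k)) i (Jv u) j :=
    fun j => Function.apply_update (fun _ t => Jv t) ts i u j
  rw [Finset.sum_congr rfl (fun j _ => e j),
      Finset.sum_update_of_mem (Finset.mem_univ i),
      Finset.sum_eq_add_sum_sdiff_singleton_of_mem (Finset.mem_univ i) (fun k => Jv (ts k))]
  omega

lemma irew_Rfs_dec {t u : ATerm FS} (h : IRew Rfs t u) : Jv u < Jv t := by
  induction h with
  | rule l r σ hm hnf =>
    simp only [Rfs, Set.mem_insert_iff, Set.mem_singleton_iff, Prod.mk.injEq] at hm
    rcases hm with ⟨hl, hr⟩ | ⟨hl, hr⟩ <;> subst hl <;> subst hr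
    · simp
    · exfalso
      have hps : PSub fT ((appT fT (appT sT (Term.var 0))).subst σ) := by
        rw [appT_subst, fT_subst]
        refine ⟨none, _, ⟨0, by simp⟩, rfl, ?_⟩
        exact Subterm.refl _
      have hnff := hnf fT hps
      apply hnff sT
      have hr := Rew.rule (R := Rfs) fT sT σ (by simp [Rfs])
      rwa [fT_subst, sT_subst] at hr
  | congr f ts i u hu ih => exact Jv_mono f ts i u ih

lemma Jv_le_size : ∀ t : ATerm FS, Jv t ≤ t.size := by
  intro t
  induction t with
  | var x => simp [Jv, Term.size]
  | app f ts ih =>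
    simp only [Jv, Term.size]
    have h1 := jhead_le f
    have h2 : ∑ i, Jv (ts i) ≤ ∑ i, (ts i).size := Finset.sum_le_sum (fun i _ => ih i)
    omega

lemma dcOn_Rfs_le (n : ℕ) : dcOn (IRew Rfs) ApplicativeT n ≤ n := by
  apply csSup_le'
  rintro m ⟨t, _, hsize, rfl⟩
  calc dh (IRew Rfs) t
      ≤ Jv t := dh_le (fun _ _ h => relpow_le_measure Jv (fun _ _ hab => irew_Rfs_dec hab) h)
    _ ≤ t.size := Jv_le_size t
    _ ≤ n := hsize

end Linear

/-- for `R = {f → s, f ∘ (s ∘ x) → s ∘ (s ∘ (f ∘ x))}`, the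
uncurried system `U↓(R)` admits innermost derivations of length `2^n` from
`f₁ⁿ(s₁(x))` for every `n ≥ 1`, hence `idc_{U↓(R)}(n + 3) ≥ 2^n`, so its
innermost derivational complexity is at least exponential, while
`idc_R(n) ∈ O(n)`. -/
theorem uncurrying_exponential_idc :
    (∀ n : ℕ, 1 ≤ n →
      ∃ u, RelPow (IRew UDfs) (2 ^ n) (f1T^[n] (s1T (.var 0))) u) ∧
    (∀ n : ℕ, 2 ^ n ≤ dcOn (IRew UDfs) (GoodTerm aaFS) (n + 3)) ∧
    BigO (dcOn (IRew Rfs) ApplicativeT) (fun n => n) := by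
  refine ⟨fun n hn => derivation n hn, fun n => part2 n, ⟨1, 0, fun n => ?_⟩⟩
  simpa using dcOn_Rfs_le n
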